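/- Let $K$ be a field of characteristic different from $2$ and let $a, b, c \in K$ be such that the Weierstrass curve $E : y^2 = x^3 - ax^2 - cx + b^2$ over $K$ has nonzero discriminant. Let $u, z \in K$ satisfy $z^2 = (u^2 + a)^2 + 8bu + 4c$, and set $x = (z + u^2 + a)/2$, $\tilde{x} = (-z + u^2 + a)/2$, $y = ux + b$, $\tilde{y} = u\tilde{x} + b$. Assume $(z, y) \neq (0, 0)$. Then $Q := (x, y)$, $\tilde{Q} := (\tilde{x}, \tilde{y})$ and $P := (0, b)$ are affine points of $E$, and in the group of points of $E$ one has $\tilde{Q} = -(Q + P)$. -/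

import Mathlib

open WeierstrassCurve.Affine

private lemma some_eq_some {K : Type*} [Field K] {W : WeierstrassCurve.Affine K}
    {x₁ y₁ x₂ y₂ : K} {h₁ : W.Nonsingular x₁ y₁} {h₂ : W.Nonsingular x₂ y₂}
    (hx : x₁ = x₂) (hy : y₁ = y₂) :
    WeierstrassCurve.Affine.Point.some _ _ h₁ = WeierstrassCurve.Affine.Point.some _ _ h₂ := by
  subst hx hy; rfl

open Classical in
/-- Proposition 6.3(d): under the explicit isomorphism between
`F : z² = (u²+a)² + 8bu + 4c` and `E : y² = x³ - ax² - cx + b²`, the involution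
`(u, z) ↦ (u, -z)` of `F` corresponds to the map `Q ↦ -Q - P` on points of `E`,
where `P = (0, b)`. -/
theorem stmt_9 {K : Type*} [Field K] (hchar : (2 : K) ≠ 0) (a b c : K)
    (W : WeierstrassCurve.Affine K) (hW : W = ⟨0, -a, 0, -c, b ^ 2⟩)
    (hΔ : W.Δ ≠ 0)
    (u z : K) (hz : z ^ 2 = (u ^ 2 + a) ^ 2 + 8 * b * u + 4 * c)
    (x xt y yt : K)
    (hx : x = (z + u ^ 2 + a) / 2) (hxt : xt = (-z + u ^ 2 + a) / 2)
    (hy : y = u * x + b) (hyt : yt = u * xt + b)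
    (hne : ¬(z = 0 ∧ y = 0)) :
    ∃ (hQ : W.Nonsingular x y) (hQt : W.Nonsingular xt yt)
      (hP : W.Nonsingular 0 b),
      WeierstrassCurve.Affine.Point.some _ _ hQt =
        -(WeierstrassCurve.Affine.Point.some _ _ hQ +
            WeierstrassCurve.Affine.Point.some _ _ hP) := by
  subst hy hyt
  have h4 : (4 : K) ≠ 0 := by
    have := mul_ne_zero hchar hchar; norm_num at this ⊢; exact this
  have h8 : (8 : K) ≠ 0 := by
    have := mul_ne_zero h4 hchar; norm_num at this ⊢; exact this
  have hx' : 2 * x = z + u ^ 2 + a := by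
    rw [hx]; field_simp
  have hxt' : 2 * xt = -z + u ^ 2 + a := by
    rw [hxt]; field_simp
  clear hx hxt
  subst hW
  set W : WeierstrassCurve.Affine K := ⟨0, -a, 0, -c, b ^ 2⟩ with hW
  -- the three points satisfy the Weierstrass equation
  have heQ : W.Equation x (u * x + b) := by
    rw [equation_iff]
    apply mul_left_cancel₀ h8
    linear_combination (-(2*x))*hz + (-(2*x)*(2*x - u^2 - a + z))*hx'
  have heQt : W.Equation xt (u * xt + b) := by
    rw [equation_iff]
    apply mul_left_cancel₀ h8
    linear_combination (-(2*xt))*hz + (-(2*xt)*(2*xt - u^2 - a - z))*hxt'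
  have heP : W.Equation 0 b := by
    rw [equation_iff]; ring
  have hQ := (W.equation_iff_nonsingular_of_Δ_ne_zero hΔ).mp heQ
  have hQt := (W.equation_iff_nonsingular_of_Δ_ne_zero hΔ).mp heQt
  have hP := (W.equation_iff_nonsingular_of_Δ_ne_zero hΔ).mp heP
  -- if x = 0 then b ≠ 0
  have habx : x = 0 → b ≠ 0 := by
    intro h0 hb0
    have hc0 : c = 0 := by
      apply mul_left_cancel₀ h8
      rw [h0] at hx'
      linear_combination (-2)*hz + (2*(u^2+a) - 2*z)*hx' - (16*u)*hb0
    apply hΔ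
    rw [hW]
    simp [WeierstrassCurve.Δ, WeierstrassCurve.b₂, WeierstrassCurve.b₄,
      WeierstrassCurve.b₆, WeierstrassCurve.b₈, hb0, hc0]
  -- the two points are never "opposite", so addition is by the chord formula
  have hxy : x = 0 → u * x + b ≠ W.negY 0 b := by
    intro h0 hcon
    apply habx h0
    rw [h0] at hcon
    simp only [negY, hW] at hcon
    apply mul_left_cancel₀ hchar
    linear_combination hcon
  -- the slope of the chord is u
  have hs : W.slope x 0 (u * x + b) b = u := by
    by_cases h0 : x = 0
    · have hb := habx h0
      have hc : c = -(2 * b * u) := by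
        apply mul_left_cancel₀ h8
        rw [h0] at hx'
        linear_combination (-2)*hz + (2*(u^2+a) - 2*z)*hx'
      rw [slope_of_Y_ne h0 (hxy h0)]
      simp only [negY, hW, h0]
      rw [div_eq_iff]
      · linear_combination -hc
      · intro hcon
        apply mul_ne_zero hb hchar
        linear_combination hcon
    · rw [slope_of_X_ne h0]
      rw [div_eq_iff (sub_ne_zero.mpr h0)]
      ring
  -- the coordinates of the sum
  have hX : xt = W.addX x 0 (W.slope x 0 (u * x + b) b) := by
    rw [hs]
    simp only [addX, hW]
    apply mul_left_cancel₀ hchar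
    linear_combination hxt' + hx'
  have hY : u * xt + b =
      W.negY (W.addX x 0 (W.slope x 0 (u * x + b) b))
        (W.addY x 0 (u * x + b) (W.slope x 0 (u * x + b) b)) := by
    rw [addY, negY_negY, negAddY, ← hX, hs]
    ring
  refine ⟨hQ, hQt, hP, ?_⟩
  rw [Point.add_some (fun h => hxy h.1 h.2), Point.neg_some]
  exact some_eq_some hX hY
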